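/- Let β be real. The formal series h(τ, β) = 3^{β/3 - 1}·(-τ)^β · Σ_{k=0}^{N} 1/(k!·3^k·(-τ)^{3k}·Γ(1 + β - 3k)), truncated at any finite N, satisfies the ODE θ''' - τ θ' + β θ = 0 up to a remainder of order O((-τ)^{β - 3N - 2}) as τ → -∞. -/

import Mathlib

open Filter Asymptotics

/-- The truncated formal asymptotic series `h(τ, β)` (with the convention
`1/Γ(x) = 0` at nonpositive integers `x`, automatic since `Real.Gamma`
vanishes there). -/
noncomputable def hTrunc (β : ℝ) (N : ℕ) (τ : ℝ) : ℝ :=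
  (3 : ℝ) ^ (β / 3 - 1) * (-τ) ^ β *
    ∑ k ∈ Finset.range (N + 1),
      1 / ((k.factorial : ℝ) * 3 ^ k * (-τ) ^ (3 * k) * Real.Gamma (1 + β - 3 * (k : ℝ)))

/-- coefficients of the expanded series -/
noncomputable def hCoef (β : ℝ) (k : ℕ) : ℝ :=
  (3 : ℝ) ^ (β / 3 - 1) / ((k.factorial : ℝ) * 3 ^ k * Real.Gamma (1 + β - 3 * (k : ℝ)))

lemma gamma_step (x : ℝ) :
    1 / Real.Gamma (x - 3) = (x - 1) * (x - 2) * (x - 3) / Real.Gamma x := by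
  by_cases h3 : x - 3 = 0
  · have hx : x = 3 := by linarith
    subst hx
    have hγ : Real.Gamma ((3:ℝ) - 3) = 0 := by norm_num [Real.Gamma_zero]
    rw [hγ]
    norm_num
  by_cases h2 : x - 2 = 0
  · have hx : x = 2 := by linarith
    subst hx
    have hγ : Real.Gamma ((2:ℝ) - 3) = 0 := by
      rw [Real.Gamma_eq_zero_iff]; exact ⟨1, by norm_num⟩
    rw [hγ]
    norm_num
  by_cases h1 : x - 1 = 0
  · have hx : x = 1 := by linarith
    subst hx
    have hγ : Real.Gamma ((1:ℝ) - 3) = 0 := by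
      rw [Real.Gamma_eq_zero_iff]; exact ⟨2, by norm_num⟩
    rw [hγ]
    norm_num
  · have e3 : Real.Gamma (x - 2) = (x - 3) * Real.Gamma (x - 3) := by
      have := Real.Gamma_add_one h3
      simpa [show x - 3 + 1 = x - 2 by ring] using this
    have e2 : Real.Gamma (x - 1) = (x - 2) * Real.Gamma (x - 2) := by
      have := Real.Gamma_add_one h2
      simpa [show x - 2 + 1 = x - 1 by ring] using this
    have e1 : Real.Gamma x = (x - 1) * Real.Gamma (x - 1) := by
      have := Real.Gamma_add_one h1
      simpa [show x - 1 + 1 = x by ring] using this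
    have key : Real.Gamma x = (x - 1) * (x - 2) * (x - 3) * Real.Gamma (x - 3) := by
      rw [e1, e2, e3]; ring
    by_cases hg : Real.Gamma (x - 3) = 0
    · rw [hg, key, hg]
      simp
    · rw [key]
      field_simp

lemma hCoef_rec (β : ℝ) (k : ℕ) :
    3 * ((k : ℝ) + 1) * hCoef β (k + 1)
      = (β - 3 * k) * (β - 3 * k - 1) * (β - 3 * k - 2) * hCoef β k := by
  have hfac : ((k + 1).factorial : ℝ) = ((k : ℝ) + 1) * (k.factorial : ℝ) := by
    push_cast [Nat.factorial_succ]; ring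
  set A : ℝ := (3 : ℝ) ^ (β / 3 - 1) with hA
  set x : ℝ := 1 + β - 3 * (k : ℝ) with hxdef
  set f : ℝ := (k.factorial : ℝ) * 3 ^ k with hf
  have hx := gamma_step x
  have ht : (3 * ((k : ℝ) + 1)) ≠ 0 := by positivity
  have harg : 1 + β - 3 * (((k : ℕ) + 1 : ℕ) : ℝ) = x - 3 := by
    rw [hxdef]; push_cast; ring
  have hL : 3 * ((k : ℝ) + 1) * hCoef β (k + 1) = A / (f * Real.Gamma (x - 3)) := by
    unfold hCoef
    rw [hfac, pow_succ, harg]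
    rw [show ((k : ℝ) + 1) * (k.factorial : ℝ) * ((3 : ℝ) ^ k * 3) * Real.Gamma (x - 3)
        = (3 * ((k : ℝ) + 1)) * (f * Real.Gamma (x - 3)) from by rw [hf]; ring]
    rw [← div_div, mul_div_assoc']
    rw [mul_comm (3 * ((k : ℝ) + 1)) (A / (3 * ((k : ℝ) + 1)))]
    rw [div_mul_cancel₀ _ ht]
  have hP : (β - 3 * (k : ℝ)) * (β - 3 * (k : ℝ) - 1) * (β - 3 * (k : ℝ) - 2)
      = (x - 1) * (x - 2) * (x - 3) := by rw [hxdef]; ring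
  have hR : (β - 3 * k) * (β - 3 * k - 1) * (β - 3 * k - 2) * hCoef β k
      = A / (f * Real.Gamma (x - 3)) := by
    unfold hCoef
    rw [hP, ← hxdef, ← hf, ← hA]
    calc (x - 1) * (x - 2) * (x - 3) * (A / (f * Real.Gamma x))
        = A / f * (((x - 1) * (x - 2) * (x - 3)) / Real.Gamma x) := by
          rw [div_mul_div_comm, mul_div_assoc']
          ring_nf
      _ = A / f * (1 / Real.Gamma (x - 3)) := by rw [← hx]
      _ = A / (f * Real.Gamma (x - 3)) := by
          rw [div_mul_div_comm, mul_one]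
  rw [hL, hR]

lemma hasDerivAt_sum_rpow (N : ℕ) (c e : ℕ → ℝ) {τ : ℝ} (hτ : τ < 0) :
    HasDerivAt (fun t => ∑ k ∈ Finset.range (N + 1), c k * (-t) ^ (e k))
      (∑ k ∈ Finset.range (N + 1), (c k * -(e k)) * (-τ) ^ (e k - 1)) τ := by
  apply HasDerivAt.fun_sum
  intro k _
  have hne : -τ ≠ 0 := by intro h; nlinarith [h]
  have h1 : HasDerivAt (fun t : ℝ => -t) (-1) τ := (hasDerivAt_id τ).neg
  have h2 : HasDerivAt (fun x : ℝ => x ^ (e k)) (e k * (-τ) ^ (e k - 1)) (-τ) :=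
    Real.hasDerivAt_rpow_const (Or.inl hne)
  have h3 := (h2.comp τ h1).const_mul (c k)
  exact h3.congr_deriv (by ring)

/-- On the negative axis, `hTrunc` equals the expanded series. -/
lemma hTrunc_eq (β : ℝ) (N : ℕ) {τ : ℝ} (hτ : τ < 0) :
    hTrunc β N τ
      = ∑ k ∈ Finset.range (N + 1), hCoef β k * (-τ) ^ (β - 3 * (k : ℝ)) := by
  have hpos : (0 : ℝ) < -τ := by linarith
  unfold hTrunc hCoef
  rw [Finset.mul_sum]
  refine Finset.sum_congr rfl fun k _ => ?_
  have hcast : (3 : ℝ) * (k : ℝ) = ((3 * k : ℕ) : ℝ) := by push_cast; ring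
  have hp : (-τ) ^ (β - 3 * (k : ℝ)) = (-τ) ^ β / (-τ) ^ (3 * k : ℕ) := by
    rw [Real.rpow_sub hpos, hcast, Real.rpow_natCast]
  rw [hp]
  have hne : ((-τ) ^ (3 * k : ℕ)) ≠ 0 := by positivity
  rw [div_eq_mul_inv, div_eq_mul_inv, div_eq_mul_inv, div_eq_mul_inv]
  simp only [mul_inv, one_mul]
  ring

lemma deriv_eqOn_neg {f g g' : ℝ → ℝ} (hfg : ∀ τ < (0 : ℝ), f τ = g τ)
    (hg : ∀ τ < (0 : ℝ), HasDerivAt g (g' τ) τ) :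
    ∀ τ < (0 : ℝ), deriv f τ = g' τ := by
  intro τ hτ
  have h1 : f =ᶠ[nhds τ] g := by
    filter_upwards [Iio_mem_nhds hτ] with t ht using hfg t ht
  rw [h1.deriv_eq, (hg τ hτ).deriv]

theorem truncated_series_asymptotic_solution (β : ℝ) (N : ℕ) :
    (fun τ : ℝ =>
        iteratedDeriv 3 (hTrunc β N) τ - τ * deriv (hTrunc β N) τ + β * hTrunc β N τ)
      =O[atBot] fun τ : ℝ => (-τ) ^ (β - 3 * (N : ℝ) - 2) := by
  set c0 : ℕ → ℝ := hCoef β with hc0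
  set e0 : ℕ → ℝ := fun k => β - 3 * (k : ℝ) with he0
  set c1 : ℕ → ℝ := fun k => c0 k * -(e0 k) with hc1
  set e1 : ℕ → ℝ := fun k => e0 k - 1 with he1
  set c2 : ℕ → ℝ := fun k => c1 k * -(e1 k) with hc2
  set e2 : ℕ → ℝ := fun k => e1 k - 1 with he2
  set c3 : ℕ → ℝ := fun k => c2 k * -(e2 k) with hc3
  set e3 : ℕ → ℝ := fun k => e2 k - 1 with he3
  set K : ℝ := -((β - 3 * N) * (β - 3 * N - 1) * (β - 3 * N - 2) * hCoef β N) with hK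
  have d1 : ∀ τ < (0 : ℝ), deriv (hTrunc β N) τ
      = ∑ k ∈ Finset.range (N + 1), c1 k * (-τ) ^ (e1 k) :=
    deriv_eqOn_neg (fun τ hτ => hTrunc_eq β N hτ)
      (fun τ hτ => hasDerivAt_sum_rpow N c0 e0 hτ)
  have d2 : ∀ τ < (0 : ℝ), deriv (deriv (hTrunc β N)) τ
      = ∑ k ∈ Finset.range (N + 1), c2 k * (-τ) ^ (e2 k) :=
    deriv_eqOn_neg d1 (fun τ hτ => hasDerivAt_sum_rpow N c1 e1 hτ)
  have d3 : ∀ τ < (0 : ℝ), deriv (deriv (deriv (hTrunc β N))) τ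
      = ∑ k ∈ Finset.range (N + 1), c3 k * (-τ) ^ (e3 k) :=
    deriv_eqOn_neg d2 (fun τ hτ => hasDerivAt_sum_rpow N c2 e2 hτ)
  have key : ∀ τ < (0 : ℝ),
      iteratedDeriv 3 (hTrunc β N) τ - τ * deriv (hTrunc β N) τ + β * hTrunc β N τ
        = K * (-τ) ^ (β - 3 * (N : ℝ) - 3) := by
    intro τ hτ
    have hpos : (0 : ℝ) < -τ := by linarith
    have hne : -τ ≠ 0 := ne_of_gt hpos
    have hiter : iteratedDeriv 3 (hTrunc β N) τ = deriv (deriv (deriv (hTrunc β N))) τ := by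
      simp [iteratedDeriv_succ, iteratedDeriv_zero]
    rw [hiter, d3 τ hτ, d1 τ hτ, hTrunc_eq β N hτ]
    set v : ℕ → ℝ := fun k => 3 * (k : ℝ) * hCoef β k * (-τ) ^ (β - 3 * (k : ℝ)) with hv
    have step : ∀ k ∈ Finset.range (N + 1),
        c3 k * (-τ) ^ (e3 k) - τ * (c1 k * (-τ) ^ (e1 k)) + β * (c0 k * (-τ) ^ (e0 k))
          = v k - v (k + 1) := by
      intro k _
      have hrec := hCoef_rec β k
      have hx1 : (-τ) ^ (e0 k) = (-τ) ^ (e1 k) * (-τ) := by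
        rw [← Real.rpow_add_one hne (e1 k)]
        norm_num [he1, he0]
      have hvk1 : v (k + 1)
          = (β - 3 * k) * (β - 3 * k - 1) * (β - 3 * k - 2) * hCoef β k
              * (-τ) ^ (e3 k) := by
        simp only [hv]
        have harg : β - 3 * (((k : ℕ) + 1 : ℕ) : ℝ) = e3 k := by
          simp only [he3, he2, he1, he0]; push_cast; ring
        push_cast at harg ⊢
        rw [harg]
        rw [← hrec]
      rw [hvk1]
      simp only [hv, hc3, hc2, hc1, he2, he1, he0, hc0]
      rw [hx1]
      ring
    have hvN : v (N + 1) = -K * (-τ) ^ (β - 3 * (N : ℝ) - 3) := by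
      simp only [hv, hK]
      have harg : β - 3 * (((N : ℕ) + 1 : ℕ) : ℝ) = β - 3 * (N : ℝ) - 3 := by
        push_cast; ring
      push_cast at harg ⊢
      rw [harg, ← hCoef_rec]
      ring
    calc ∑ k ∈ Finset.range (N + 1), c3 k * (-τ) ^ (e3 k)
          - τ * ∑ k ∈ Finset.range (N + 1), c1 k * (-τ) ^ (e1 k)
          + β * ∑ k ∈ Finset.range (N + 1), c0 k * (-τ) ^ (e0 k)
        = ∑ k ∈ Finset.range (N + 1),
            (c3 k * (-τ) ^ (e3 k) - τ * (c1 k * (-τ) ^ (e1 k))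
              + β * (c0 k * (-τ) ^ (e0 k))) := by
          rw [Finset.mul_sum, Finset.mul_sum, ← Finset.sum_sub_distrib,
            ← Finset.sum_add_distrib]
      _ = ∑ k ∈ Finset.range (N + 1), (v k - v (k + 1)) := Finset.sum_congr rfl step
      _ = v 0 - v (N + 1) := Finset.sum_range_sub' v (N + 1)
      _ = K * (-τ) ^ (β - 3 * (N : ℝ) - 3) := by
          rw [hvN]
          simp [hv]
  have heq : (fun τ : ℝ =>
      iteratedDeriv 3 (hTrunc β N) τ - τ * deriv (hTrunc β N) τ + β * hTrunc β N τ)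
      =ᶠ[atBot] fun τ : ℝ => K * (-τ) ^ (β - 3 * (N : ℝ) - 3) := by
    filter_upwards [eventually_lt_atBot (0 : ℝ)] with τ hτ using key τ hτ
  refine heq.trans_isBigO ?_
  rw [isBigO_iff]
  refine ⟨|K|, ?_⟩
  filter_upwards [eventually_le_atBot (-1 : ℝ)] with τ hτ
  have hx1 : (1 : ℝ) ≤ -τ := by linarith
  have hxpos : (0 : ℝ) < -τ := by linarith
  have hle : (-τ) ^ (β - 3 * (N : ℝ) - 3) ≤ (-τ) ^ (β - 3 * (N : ℝ) - 2) :=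
    Real.rpow_le_rpow_of_exponent_le hx1 (by linarith)
  have h1 : ‖K * (-τ) ^ (β - 3 * (N : ℝ) - 3)‖
      = |K| * (-τ) ^ (β - 3 * (N : ℝ) - 3) := by
    rw [norm_mul, Real.norm_eq_abs, Real.norm_eq_abs,
      abs_of_nonneg (Real.rpow_nonneg hxpos.le _)]
  have h2 : ‖(-τ) ^ (β - 3 * (N : ℝ) - 2)‖ = (-τ) ^ (β - 3 * (N : ℝ) - 2) := by
    rw [Real.norm_eq_abs, abs_of_nonneg (Real.rpow_nonneg hxpos.le _)]
  rw [h1, h2]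
  exact mul_le_mul_of_nonneg_left hle (abs_nonneg K)
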